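/- Under Hypothesis (M), for all p, k ∈ ℕ and all L ∈ ℕ, the k-th moment of the modified finite-volume measure obeys | (1/|Λ_L|) Σ_{n∈Λ_L} ∫₀¹ E[ ω_n^{2p} · ( (H^ω_L|_{ω_n→uω_n})^k )_{nn} ] du | ≤ (2d+1)^k C^k a^{k+2p} (k+2p)^{k+2p}. -/

import Mathlib

open MeasureTheory ProbabilityTheory Filter Topology

noncomputable section

/-- Configuration space `Ω = ℝ^{ℤ^d}`. -/
abbrev Cfg (d : ℕ) : Type := (Fin d → ℤ) → ℝ

/-- The discrete cube `Λ_L = {n ∈ ℤ^d : |n_i| ≤ L}`. -/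
def cube (d L : ℕ) : Finset (Fin d → ℤ) :=
  Fintype.piFinset fun _ => Finset.Icc (-(L : ℤ)) (L : ℤ)

/-- The finite-volume Anderson Hamiltonian `H^ω_L` as a `Λ_L × Λ_L` real matrix. -/
def ham (d L : ℕ) (ω : Cfg d) : Matrix (cube d L) (cube d L) ℝ :=
  Matrix.of fun n m =>
    if (∑ i, |(n : Fin d → ℤ) i - (m : Fin d → ℤ) i|) = 1 then 1
    else if n = m then ω (n : Fin d → ℤ) else 0

/-- Continuous functional calculus for real symmetric matrices:
`f(A) = Σ_i f(λ_i) ψ_i ψ_iᵀ` in an orthonormal eigenbasis (junk value `0` if `A` is not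
symmetric). -/
def matFC {N : Type*} [Fintype N] [DecidableEq N] (f : ℝ → ℝ) (A : Matrix N N ℝ) :
    Matrix N N ℝ :=
  if hA : A.IsHermitian then
    Matrix.of fun n m =>
      ∑ i, f (hA.eigenvalues i) * hA.eigenvectorBasis i n * hA.eigenvectorBasis i m
  else 0

/-- The centered, normalized linear eigenvalue statistic
`X_{f,L}(ω) = |Λ_L|^{-1/2} (Tr f(H^ω_L) - E[Tr f(H^ω_L)])`. -/
def XX (d L : ℕ) (Pr : Measure (Cfg d)) (f : ℝ → ℝ) (ω : Cfg d) : ℝ :=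
  (Real.sqrt ((cube d L).card))⁻¹ *
    ((matFC f (ham d L ω)).trace - ∫ ω', (matFC f (ham d L ω')).trace ∂Pr)

/-- The class `C¹_P(ℝ)`: differentiable functions with continuous derivative of at most
polynomial growth. -/
def CP1 (f : ℝ → ℝ) : Prop :=
  Differentiable ℝ f ∧ Continuous (deriv f) ∧ ∃ P : Polynomial ℝ, ∀ x, |deriv f x| ≤ P.eval x

/-- Hypothesis (M) on the single-site distribution. -/
def HypM (μ : Measure ℝ) : Prop :=
  (∀ k : ℕ, Integrable (fun x => |x| ^ k) μ) ∧
  ∃ C a : ℝ, 1 ≤ C ∧ 1 ≤ a ∧ ∀ k : ℕ, (∫ x, |x| ^ k ∂μ) ≤ C * a ^ k * (k : ℝ) ^ k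

/-- The coordinates `(ω_n)` are i.i.d. with common law `μ` under `Pr`. -/
def IID (d : ℕ) (μ : Measure ℝ) (Pr : Measure (Cfg d)) : Prop :=
  iIndepFun (fun (n : Fin d → ℤ) (ω : Cfg d) => ω n) Pr ∧
  ∀ n : Fin d → ℤ, Pr.map (fun ω => ω n) = μ

/-- `∫ g dν̄_{p,L}`, the integral against the modified finite-volume density of states
measure. -/
def nubarInt (d L p : ℕ) (Pr : Measure (Cfg d)) (g : ℝ → ℝ) : ℝ :=
  (((cube d L).card : ℝ))⁻¹ *
    ∑ n ∈ (cube d L).attach,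
      ∫ u in Set.Icc (0 : ℝ) 1,
        ∫ ω, (ω (n : Fin d → ℤ)) ^ (2 * p) *
          matFC g (ham d L (Function.update ω (n : Fin d → ℤ)
            (u * ω (n : Fin d → ℤ)))) n n ∂Pr

/-- Topological support of a measure on `ℝ`. -/
def msupport (μ : Measure ℝ) : Set ℝ :=
  {x | ∀ U : Set ℝ, IsOpen U → x ∈ U → μ U ≠ 0}

end


noncomputable section PathAux

-- AUX

/-- neighbors of `s` inside the cube -/
def adjSet (d L : ℕ) (s : Fin d → ℤ) : Finset (Fin d → ℤ) :=
  (cube d L).filter (fun m => (∑ i, |s i - m i|) = 1)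

lemma adjSet_card_le (d L : ℕ) (s : Fin d → ℤ) : (adjSet d L s).card ≤ 2 * d := by
  classical
  have hsub : adjSet d L s ⊆ (Finset.univ : Finset (Fin d × Bool)).image
      (fun ib => Function.update s ib.1 (s ib.1 + (if ib.2 then 1 else -1))) := by
    intro m hm
    rw [adjSet, Finset.mem_filter] at hm
    obtain ⟨-, hsum⟩ := hm
    have hex : ∃ i, |s i - m i| ≠ 0 := by
      by_contra h
      push_neg at h
      rw [Finset.sum_eq_zero (fun j _ => h j)] at hsum
      exact one_ne_zero hsum.symm
    obtain ⟨i, hi⟩ := hex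
    have h1 : |s i - m i| + ∑ j ∈ Finset.univ.erase i, |s j - m j| = 1 := by
      rw [Finset.add_sum_erase Finset.univ (fun j => |s j - m j|) (Finset.mem_univ i)]
      exact hsum
    have h2 : (1:ℤ) ≤ |s i - m i| := Int.one_le_abs (abs_ne_zero.mp hi)
    have h3 : (0:ℤ) ≤ ∑ j ∈ Finset.univ.erase i, |s j - m j| :=
      Finset.sum_nonneg fun j _ => abs_nonneg _
    have hrest0 : ∑ j ∈ Finset.univ.erase i, |s j - m j| = 0 := by linarith
    have habs1 : |s i - m i| = 1 := by linarith
    have hothers : ∀ j, j ≠ i → m j = s j := by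
      intro j hj
      have := (Finset.sum_eq_zero_iff_of_nonneg (fun j _ => abs_nonneg (s j - m j))).mp
        hrest0 j (Finset.mem_erase.mpr ⟨hj, Finset.mem_univ j⟩)
      have := abs_eq_zero.mp this
      omega
    rcases (abs_eq (by norm_num : (0:ℤ) ≤ 1)).mp habs1 with hcase | hcase
    · refine Finset.mem_image.mpr ⟨(i, false), Finset.mem_univ _, ?_⟩
      funext j
      by_cases hji : j = i
      · subst hji; rw [Function.update_self]; simp; omega
      · rw [Function.update_of_ne hji]; exact (hothers j hji).symm
    · refine Finset.mem_image.mpr ⟨(i, true), Finset.mem_univ _, ?_⟩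
      funext j
      by_cases hji : j = i
      · subst hji; rw [Function.update_self]; simp; omega
      · rw [Function.update_of_ne hji]; exact (hothers j hji).symm
  calc (adjSet d L s).card ≤ _ := Finset.card_le_card hsub
    _ ≤ (Finset.univ : Finset (Fin d × Bool)).card := Finset.card_image_le
    _ = 2 * d := by simp [Finset.card_univ]; ring

/-- multisets of "diagonal sites" along admissible paths of length `j` starting at `s` -/
def paths (d L : ℕ) : ℕ → (Fin d → ℤ) → Multiset (Multiset (Fin d → ℤ))
  | 0, _ => {0}
  | j+1, s => ((adjSet d L s).val.bind fun m => paths d L j m)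
      + (paths d L j s).map (fun mon => s ::ₘ mon)

lemma paths_card_le (d L : ℕ) : ∀ (j : ℕ) (s : Fin d → ℤ),
    Multiset.card (paths d L j s) ≤ (2*d+1)^j := by
  intro j
  induction j with
  | zero => intro s; simp [paths]
  | succ j ih =>
    intro s
    rw [paths]
    rw [Multiset.card_add, Multiset.card_map, Multiset.card_bind]
    have h1 : ((adjSet d L s).val.map fun m => Multiset.card (paths d L j m)).sum
        ≤ (2*d) * (2*d+1)^j := by
      have := Multiset.sum_le_card_nsmul
        ((adjSet d L s).val.map fun m => Multiset.card (paths d L j m)) ((2*d+1)^j) ?_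
      · refine this.trans ?_
        rw [Multiset.card_map]
        have := adjSet_card_le d L s
        calc (adjSet d L s).val.card • (2*d+1)^j = (adjSet d L s).card * (2*d+1)^j := by
              rw [smul_eq_mul]; rfl
          _ ≤ (2*d) * (2*d+1)^j := Nat.mul_le_mul_right _ this
      · intro x hx
        obtain ⟨m, _, rfl⟩ := Multiset.mem_map.mp hx
        exact ih m
    calc ((adjSet d L s).val.map fun m => Multiset.card (paths d L j m)).sum
          + Multiset.card (paths d L j s)
        ≤ (2*d) * (2*d+1)^j + (2*d+1)^j := Nat.add_le_add h1 (ih s)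
      _ = (2*d+1)^(j+1) := by ring

lemma mem_paths_card_le (d L : ℕ) : ∀ (j : ℕ) (s : Fin d → ℤ)
    (mon : Multiset (Fin d → ℤ)), mon ∈ paths d L j s → Multiset.card mon ≤ j := by
  intro j
  induction j with
  | zero =>
    intro s mon hmon
    rw [paths, Multiset.mem_singleton] at hmon
    simp [hmon]
  | succ j ih =>
    intro s mon hmon
    rw [paths, Multiset.mem_add] at hmon
    rcases hmon with h | h
    · obtain ⟨m, _, hm⟩ := Multiset.mem_bind.mp h
      exact (ih m mon hm).trans (Nat.le_succ j)
    · obtain ⟨mon', hmon', rfl⟩ := Multiset.mem_map.mp h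
      rw [Multiset.card_cons]
      exact Nat.succ_le_succ (ih s mon' hmon')

def pathVal (d : ℕ) (ω : Cfg d) (mon : Multiset (Fin d → ℤ)) : ℝ :=
  (mon.map fun t => |ω t|).prod

lemma pathVal_nonneg (d : ℕ) (ω : Cfg d) (mon : Multiset (Fin d → ℤ)) :
    0 ≤ pathVal d ω mon := by
  apply Multiset.prod_nonneg
  intro x hx
  obtain ⟨t, _, rfl⟩ := Multiset.mem_map.mp hx
  exact abs_nonneg _

def gfun (d L : ℕ) (ω : Cfg d) (j : ℕ) (s : Fin d → ℤ) : ℝ :=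
  ((paths d L j s).map (pathVal d ω)).sum

lemma gfun_nonneg (d L : ℕ) (ω : Cfg d) (j : ℕ) (s : Fin d → ℤ) :
    0 ≤ gfun d L ω j s := by
  apply Multiset.sum_nonneg
  intro x hx
  obtain ⟨mon, _, rfl⟩ := Multiset.mem_map.mp hx
  exact pathVal_nonneg d ω mon

lemma gfun_zero (d L : ℕ) (ω : Cfg d) (s : Fin d → ℤ) : gfun d L ω 0 s = 1 := by
  simp [gfun, paths, pathVal]

lemma gfun_succ (d L : ℕ) (ω : Cfg d) (j : ℕ) (s : Fin d → ℤ) :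
    gfun d L ω (j+1) s
      = (∑ m ∈ adjSet d L s, gfun d L ω j m) + |ω s| * gfun d L ω j s := by
  rw [gfun, paths, Multiset.map_add, Multiset.sum_add]
  congr 1
  · rw [Multiset.map_bind, Multiset.sum_bind, Finset.sum_eq_multiset_sum]
    rfl
  · rw [Multiset.map_map]
    have : (pathVal d ω ∘ fun mon => s ::ₘ mon) = fun mon => |ω s| * pathVal d ω mon := by
      funext mon
      simp [pathVal, Multiset.map_cons, Multiset.prod_cons]
    rw [this, Multiset.sum_map_mul_left]
    rfl


section Aux2

lemma ham_abs_le (d L : ℕ) (ω : Cfg d) (v : Fin d → ℤ) (c : ℝ) (hc : |c| ≤ |ω v|)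
    (s m : (cube d L)) :
    |ham d L (Function.update ω v c) s m| ≤
      (if (∑ i, |(s : Fin d → ℤ) i - (m : Fin d → ℤ) i|) = 1 then (1:ℝ) else 0) +
      (if s = m then |ω (s : Fin d → ℤ)| else 0) := by
  rw [ham]
  simp only [Matrix.of_apply]
  by_cases h1 : (∑ i, |(s : Fin d → ℤ) i - (m : Fin d → ℤ) i|) = 1
  · rw [if_pos h1, if_pos h1, abs_one]
    have h2 : (0:ℝ) ≤ (if s = m then |ω (s : Fin d → ℤ)| else 0) := by
      split <;> simp [abs_nonneg]
    linarith
  · rw [if_neg h1, if_neg h1, zero_add]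
    by_cases h2 : s = m
    · rw [if_pos h2, if_pos h2, Function.update_apply]
      by_cases h3 : (s : Fin d → ℤ) = v
      · rw [if_pos h3, h3]; exact hc
      · rw [if_neg h3]
    · rw [if_neg h2, if_neg h2, abs_zero]

lemma rowsum_le (d L : ℕ) (ω : Cfg d) (H : Matrix (cube d L) (cube d L) ℝ)
    (hH : ∀ s m : (cube d L), |H s m| ≤
      (if (∑ i, |(s : Fin d → ℤ) i - (m : Fin d → ℤ) i|) = 1 then (1:ℝ) else 0) +
      (if s = m then |ω (s : Fin d → ℤ)| else 0)) :
    ∀ (j : ℕ) (s : (cube d L)), (∑ m, |(H ^ j) s m|) ≤ gfun d L ω j ↑s := by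
  intro j
  induction j with
  | zero =>
    intro s
    rw [pow_zero, gfun_zero]
    have h : ∀ m : (cube d L), |(1 : Matrix (cube d L) (cube d L) ℝ) s m|
        = if s = m then 1 else 0 := by
      intro m; rw [Matrix.one_apply]; split <;> simp
    rw [Finset.sum_congr rfl (fun m _ => h m), Finset.sum_ite_eq _ s (fun _ => (1:ℝ))]
    simp
  | succ j ih =>
    intro s
    rw [pow_succ']
    calc ∑ m', |(H * H ^ j) s m'|
        ≤ ∑ m', ∑ m, |H s m| * |(H ^ j) m m'| := by
          apply Finset.sum_le_sum
          intro m' _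
          rw [Matrix.mul_apply]
          exact (Finset.abs_sum_le_sum_abs _ _).trans (le_of_eq (Finset.sum_congr rfl
            (fun m _ => abs_mul _ _)))
      _ = ∑ m, |H s m| * ∑ m', |(H ^ j) m m'| := by
          rw [Finset.sum_comm]
          exact Finset.sum_congr rfl fun m _ => (Finset.mul_sum _ _ _).symm
      _ ≤ ∑ m, |H s m| * gfun d L ω j ↑m := by
          apply Finset.sum_le_sum
          intro m _
          exact mul_le_mul_of_nonneg_left (ih m) (abs_nonneg _)
      _ ≤ ∑ m : (cube d L),
            ((if (∑ i, |(s : Fin d → ℤ) i - (m : Fin d → ℤ) i|) = 1 then (1:ℝ) else 0)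
            + (if s = m then |ω (s : Fin d → ℤ)| else 0)) * gfun d L ω j ↑m := by
          apply Finset.sum_le_sum
          intro m _
          exact mul_le_mul_of_nonneg_right (hH s m) (gfun_nonneg _ _ _ _ _)
      _ = (∑ m ∈ adjSet d L ↑s, gfun d L ω j m)
            + |ω (s : Fin d → ℤ)| * gfun d L ω j ↑s := by
          rw [Finset.sum_congr rfl (fun m _ => add_mul _ _ _), Finset.sum_add_distrib]
          congr 1
          · have h1 : ∀ m : (cube d L),
                (if (∑ i, |(s : Fin d → ℤ) i - (m : Fin d → ℤ) i|) = 1 then (1:ℝ) else 0)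
                  * gfun d L ω j ↑m
                = (fun t => if (∑ i, |(s : Fin d → ℤ) i - t i|) = 1
                    then gfun d L ω j t else 0) ↑m := by
              intro m; simp only [ite_mul, one_mul, zero_mul]
            rw [Finset.sum_congr rfl (fun m _ => h1 m),
              Finset.sum_coe_sort (cube d L)
                (fun t => if (∑ i, |(s : Fin d → ℤ) i - t i|) = 1 then gfun d L ω j t else 0),
              ← Finset.sum_filter]
            rfl
          · have h2 : ∀ m : (cube d L),
                (if s = m then |ω (s : Fin d → ℤ)| else 0) * gfun d L ω j ↑m
                = if s = m then |ω (s : Fin d → ℤ)| * gfun d L ω j ↑m else 0 := by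
              intro m; simp only [ite_mul, zero_mul]
            rw [Finset.sum_congr rfl (fun m _ => h2 m),
              Finset.sum_ite_eq _ s (fun m => |ω (s : Fin d → ℤ)| * gfun d L ω j ↑m)]
            simp
      _ = gfun d L ω (j+1) ↑s := (gfun_succ d L ω j ↑s).symm

lemma list_prod_le_avg (l : List ℝ) (h0 : ∀ x ∈ l, 0 ≤ x) (hl : l ≠ []) :
    l.prod ≤ (l.length : ℝ)⁻¹ * (l.map (fun x => x ^ l.length)).sum := by
  have hlen : (l.length : ℝ) ≠ 0 := by
    simpa using List.length_pos_iff.mpr hl |>.ne'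
  have key := Real.geom_mean_le_arith_mean_weighted (Finset.univ : Finset (Fin l.length))
    (fun _ => (l.length : ℝ)⁻¹) (fun i => l.get i ^ l.length)
    (fun i _ => by positivity)
    (by rw [Finset.sum_const, Finset.card_univ, Fintype.card_fin, nsmul_eq_mul,
            mul_inv_cancel₀ hlen])
    (fun i _ => pow_nonneg (h0 _ (l.get_mem i)) _)
  have hL : ∀ i : Fin l.length,
      ((l.get i ^ l.length : ℝ) ^ ((l.length:ℝ)⁻¹ : ℝ)) = l.get i := by
    intro i
    rw [← Real.rpow_natCast (l.get i) l.length,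
        ← Real.rpow_mul (h0 _ (l.get_mem i)), mul_inv_cancel₀ hlen, Real.rpow_one]
  rw [Finset.prod_congr rfl (fun i _ => hL i)] at key
  have hgl : ∏ i : Fin l.length, l.get i = l.prod := by
    simpa [List.get_eq_getElem] using Fin.prod_univ_get l
  rw [hgl] at key
  refine key.trans (le_of_eq ?_)
  rw [← Finset.mul_sum]
  congr 1
  simpa [List.get_eq_getElem] using Fin.sum_univ_fun_getElem l (fun x => x ^ l.length)

lemma multiset_prod_le_avg (mm : Multiset ℝ) (h0 : ∀ x ∈ mm, 0 ≤ x) (hM : mm ≠ 0) :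
    mm.prod ≤ (Multiset.card mm : ℝ)⁻¹ * (mm.map (fun x => x ^ Multiset.card mm)).sum := by
  induction mm using Quotient.inductionOn with
  | h l =>
    simp only [Multiset.quot_mk_to_coe, Multiset.prod_coe, Multiset.card_coe,
      Multiset.map_coe, Multiset.sum_coe]
    exact list_prod_le_avg l (fun x hx => h0 x (by simpa using hx)) (by simpa using hM)

end Aux2


section Aux3

variable {d : ℕ}

lemma powpow_le {m n : ℕ} (h : m ≤ n) : ((m:ℝ)) ^ m ≤ ((n:ℝ)) ^ n := by
  rcases Nat.eq_zero_or_pos n with rfl | hn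
  · have : m = 0 := Nat.le_zero.mp h
    simp [this]
  · have h1 : ((m:ℝ))^m ≤ ((n:ℝ))^m := pow_le_pow_left₀ (Nat.cast_nonneg m) (Nat.cast_le.mpr h) m
    have h2 : ((n:ℝ))^m ≤ ((n:ℝ))^n := pow_le_pow_right₀ (by exact_mod_cast hn) h
    exact h1.trans h2

lemma coord_meas (t : Fin d → ℤ) : Measurable fun ω : Cfg d => ω t := measurable_pi_apply t

lemma abs_pow_asm (M : ℕ) (ν : Measure ℝ) : AEStronglyMeasurable (fun x : ℝ => |x| ^ M) ν :=
  (continuous_abs.pow M).aestronglyMeasurable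

lemma coord_integrable {μ : Measure ℝ} {Pr : Measure (Cfg d)} (t : Fin d → ℤ)
    (hmap : Pr.map (fun ω => ω t) = μ) (M : ℕ)
    (hint : Integrable (fun x => |x| ^ M) μ) :
    Integrable (fun ω : Cfg d => |ω t| ^ M) Pr :=
  (integrable_map_measure (abs_pow_asm M _) (coord_meas t).aemeasurable).mp
    (by rw [hmap]; exact hint)

lemma coord_integral {μ : Measure ℝ} {Pr : Measure (Cfg d)} (t : Fin d → ℤ)
    (hmap : Pr.map (fun ω => ω t) = μ) (M : ℕ) :
    ∫ ω, |ω t| ^ M ∂Pr = ∫ x, |x| ^ M ∂μ := by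
  rw [← hmap, integral_map (coord_meas t).aemeasurable (abs_pow_asm M _)]

lemma integral_multiset_sum_fun {α : Type*} {Pr : Measure (Cfg d)} [IsProbabilityMeasure Pr]
    (m : Multiset α) (f : α → Cfg d → ℝ) (hf : ∀ b ∈ m, Integrable (f b) Pr) :
    Integrable (fun ω => (m.map fun b => f b ω).sum) Pr ∧
    ∫ ω, (m.map fun b => f b ω).sum ∂Pr = (m.map fun b => ∫ ω, f b ω ∂Pr).sum := by
  revert hf
  induction m using Multiset.induction_on with
  | empty => intro _; simp
  | cons b m ih =>
    intro hf
    have h1 := hf _ (Multiset.mem_cons_self b m)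
    obtain ⟨ih1, ih2⟩ := ih (fun c hc => hf c (Multiset.mem_cons_of_mem hc))
    constructor
    · simp only [Multiset.map_cons, Multiset.sum_cons]; exact h1.add ih1
    · simp only [Multiset.map_cons, Multiset.sum_cons]
      rw [integral_add h1 ih1, ih2]

def monFun (d p : ℕ) (n : Fin d → ℤ) (mon : Multiset (Fin d → ℤ)) (ω : Cfg d) : ℝ :=
  if (Multiset.card mon + 2*p) = 0 then 1
  else ((Multiset.card mon + 2*p : ℕ) : ℝ)⁻¹ *
    (((mon + Multiset.replicate (2*p) n).map
      (fun t => |ω t| ^ (Multiset.card mon + 2*p))).sum)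

lemma monFun_ge (p : ℕ) (n : Fin d → ℤ) (mon : Multiset (Fin d → ℤ)) (ω : Cfg d) :
    |ω n| ^ (2*p) * pathVal d ω mon ≤ monFun d p n mon ω := by
  set M := Multiset.card mon + 2*p with hM
  set mm := mon + Multiset.replicate (2*p) n with hmm
  have hcard : Multiset.card mm = M := by simp [hmm, hM]
  have hprod : ((mm.map fun t => |ω t|)).prod = |ω n| ^ (2*p) * pathVal d ω mon := by
    rw [hmm, Multiset.map_add, Multiset.prod_add, Multiset.map_replicate,
      Multiset.prod_replicate, mul_comm]
    rfl
  by_cases h0 : M = 0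
  · rw [monFun, if_pos h0]
    obtain ⟨h1, h2⟩ : Multiset.card mon = 0 ∧ 2*p = 0 := by omega
    rw [Multiset.card_eq_zero] at h1
    rw [h1, h2, pow_zero, one_mul]
    simp [pathVal]
  · rw [monFun, if_neg h0]
    have hne : (mm.map fun t => |ω t|) ≠ 0 := by
      intro h
      apply h0
      have := congrArg Multiset.card h
      simpa [hcard] using this
    have key := multiset_prod_le_avg (mm.map fun t => |ω t|)
      (by intro x hx; obtain ⟨t, _, rfl⟩ := Multiset.mem_map.mp hx; exact abs_nonneg _) hne
    rw [Multiset.card_map, hcard, Multiset.map_map, hprod] at key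
    exact key.trans (le_of_eq rfl)

lemma monFun_bound {μ : Measure ℝ} [IsProbabilityMeasure μ] {Pr : Measure (Cfg d)}
    [IsProbabilityMeasure Pr]
    (hmap : ∀ t : Fin d → ℤ, Pr.map (fun ω => ω t) = μ)
    (hint : ∀ j : ℕ, Integrable (fun x => |x| ^ j) μ)
    {C A : ℝ} (hC : 1 ≤ C) (ha : 1 ≤ A)
    (hmom : ∀ j : ℕ, (∫ x, |x| ^ j ∂μ) ≤ C * A ^ j * (j : ℝ) ^ j)
    (p kk : ℕ) (hkk : 1 ≤ kk) (n : Fin d → ℤ) (mon : Multiset (Fin d → ℤ))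
    (hmonc : Multiset.card mon ≤ kk) :
    Integrable (monFun d p n mon) Pr ∧
    ∫ ω, monFun d p n mon ω ∂Pr
      ≤ C * A ^ (kk + 2*p) * ((kk + 2*p : ℕ) : ℝ) ^ (kk + 2*p) := by
  set M := Multiset.card mon + 2*p with hM
  set K := kk + 2*p with hK
  have hMK : M ≤ K := by omega
  have hRHS1 : (1:ℝ) ≤ C * A ^ K * ((K : ℕ) : ℝ) ^ K := by
    have h1 : (1:ℝ) ≤ A ^ K := one_le_pow₀ ha
    have h2 : (1:ℝ) ≤ ((K : ℕ) : ℝ) ^ K := by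
      apply one_le_pow₀
      exact_mod_cast Nat.one_le_iff_ne_zero.mpr (by omega)
    have h3 := mul_le_mul (mul_le_mul hC h1 zero_le_one (by linarith)) h2 zero_le_one
      (mul_nonneg (by linarith) (by positivity))
    simpa using h3
  by_cases h0 : M = 0
  · constructor
    · have : monFun d p n mon = fun _ => (1:ℝ) := by
        funext ω; rw [monFun, if_pos h0]
      rw [this]; exact integrable_const 1
    · have : monFun d p n mon = fun _ => (1:ℝ) := by
        funext ω; rw [monFun, if_pos h0]
      rw [this]
      simpa using hRHS1
  · set mm := mon + Multiset.replicate (2*p) n with hmm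
    have hcard : Multiset.card mm = M := by simp [hmm, hM]
    obtain ⟨hi, hv⟩ := integral_multiset_sum_fun (Pr := Pr) mm (fun b ω => |ω b| ^ M)
      (fun b _ => coord_integrable b (hmap b) M (hint M))
    have heq : monFun d p n mon = fun ω => ((M : ℕ) : ℝ)⁻¹ *
        ((mm.map fun b => |ω b| ^ M)).sum := by
      funext ω; rw [monFun, if_neg h0]
    constructor
    · rw [heq]; exact hi.const_mul _
    · rw [heq]
      rw [integral_const_mul, hv]
      have hmapc : (mm.map fun b => ∫ ω, |ω b| ^ M ∂Pr)
          = Multiset.replicate (Multiset.card mm) (∫ x, |x| ^ M ∂μ) := by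
        rw [Multiset.map_congr rfl (fun b _ => coord_integral b (hmap b) M)]
        exact Multiset.map_const' mm _
      rw [hmapc, Multiset.sum_replicate, hcard, nsmul_eq_mul, ← mul_assoc,
        inv_mul_cancel₀ (by exact_mod_cast h0), one_mul]
      calc ∫ x, |x| ^ M ∂μ ≤ C * A ^ M * ((M:ℕ) : ℝ) ^ M := hmom M
        _ ≤ C * A ^ K * ((K : ℕ) : ℝ) ^ K := by
            have h1 : A ^ M ≤ A ^ K := pow_le_pow_right₀ ha hMK
            have h2 : ((M:ℕ) : ℝ) ^ M ≤ ((K : ℕ) : ℝ) ^ K := powpow_le hMK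
            have h3 : (0:ℝ) ≤ A ^ M := by positivity
            have h4 : (0:ℝ) ≤ ((M:ℕ):ℝ) ^ M := by positivity
            exact mul_le_mul (mul_le_mul (le_refl C) h1 h3 (by linarith)) h2 h4
              (mul_nonneg (by linarith) (by positivity))

end Aux3


section Aux4

lemma inner_bound {d L : ℕ} {μ : Measure ℝ} [IsProbabilityMeasure μ]
    {Pr : Measure (Cfg d)} [IsProbabilityMeasure Pr]
    (hmap : ∀ t : Fin d → ℤ, Pr.map (fun ω => ω t) = μ)
    (hint : ∀ j : ℕ, Integrable (fun x => |x| ^ j) μ)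
    {C A : ℝ} (hC : 1 ≤ C) (ha : 1 ≤ A)
    (hmom : ∀ j : ℕ, (∫ x, |x| ^ j ∂μ) ≤ C * A ^ j * (j : ℝ) ^ j)
    (p k : ℕ) (hk : 1 ≤ k) (n : (cube d L)) (u : ℝ) (hu : |u| ≤ 1) :
    |∫ ω, (ω (n : Fin d → ℤ)) ^ (2 * p) *
        ((ham d L (Function.update ω (n : Fin d → ℤ) (u * ω (n : Fin d → ℤ)))) ^ k) n n ∂Pr|
      ≤ (((2*d+1)^k : ℕ) : ℝ) *
          (C * A ^ (k + 2*p) * ((k + 2*p : ℕ) : ℝ) ^ (k + 2*p)) := by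
  have hC0 : (0:ℝ) ≤ C := by linarith
  set V0 := C * A ^ (k + 2*p) * ((k + 2*p : ℕ) : ℝ) ^ (k + 2*p) with hV0
  have hV0nn : 0 ≤ V0 := by
    rw [hV0]; exact mul_nonneg (mul_nonneg hC0 (by positivity)) (by positivity)
  set G := fun ω : Cfg d => ((paths d L k ↑n).map (fun mon => monFun d p (↑n) mon ω)).sum
    with hG
  have hbd : ∀ mon ∈ paths d L k ↑n, Integrable (monFun d p (↑n : Fin d → ℤ) mon) Pr ∧
      ∫ ω, monFun d p (↑n : Fin d → ℤ) mon ω ∂Pr ≤ V0 :=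
    fun mon hm =>
      monFun_bound hmap hint hC ha hmom p k hk ↑n mon (mem_paths_card_le d L k (↑n) mon hm)
  obtain ⟨hGint, hGval⟩ := integral_multiset_sum_fun (Pr := Pr) (paths d L k ↑n)
      (fun mon ω => monFun d p (↑n) mon ω) (fun mon hm => (hbd mon hm).1)
  have hGle : ∫ ω, G ω ∂Pr ≤ (((2*d+1)^k : ℕ) : ℝ) * V0 := by
    calc ∫ ω, G ω ∂Pr
        = ((paths d L k ↑n).map (fun mon => ∫ ω, monFun d p (↑n) mon ω ∂Pr)).sum := hGval
      _ ≤ (Multiset.card ((paths d L k ↑n).map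
            (fun mon => ∫ ω, monFun d p (↑n) mon ω ∂Pr))) • V0 :=
          Multiset.sum_le_card_nsmul _ _ (by
            intro x hx
            obtain ⟨mon, hm, rfl⟩ := Multiset.mem_map.mp hx
            exact (hbd mon hm).2)
      _ ≤ (((2*d+1)^k : ℕ) : ℝ) * V0 := by
          rw [Multiset.card_map, nsmul_eq_mul]
          exact mul_le_mul_of_nonneg_right
            (Nat.cast_le.mpr (paths_card_le d L k ↑n)) hV0nn
  have hpt : ∀ ω : Cfg d, |(ω (↑n : Fin d → ℤ)) ^ (2*p) *
      ((ham d L (Function.update ω (↑n) (u * ω ↑n))) ^ k) n n| ≤ G ω := by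
    intro ω
    have habs : |u * ω (↑n : Fin d → ℤ)| ≤ |ω (↑n : Fin d → ℤ)| := by
      rw [abs_mul]
      nlinarith [abs_nonneg (ω (↑n : Fin d → ℤ)), abs_nonneg u]
    have hrow := rowsum_le d L ω _
      (fun s m => ham_abs_le d L ω (↑n) (u * ω ↑n) habs s m) k n
    have hpow0 : (0:ℝ) ≤ |ω (↑n : Fin d → ℤ)| ^ (2*p) := by positivity
    calc |(ω (↑n : Fin d → ℤ)) ^ (2*p) *
          ((ham d L (Function.update ω (↑n) (u * ω ↑n))) ^ k) n n|
        = |ω (↑n : Fin d → ℤ)| ^ (2*p) *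
          |((ham d L (Function.update ω (↑n) (u * ω ↑n))) ^ k) n n| := by
          rw [abs_mul, abs_pow]
      _ ≤ |ω (↑n : Fin d → ℤ)| ^ (2*p) *
          ∑ m, |((ham d L (Function.update ω (↑n) (u * ω ↑n))) ^ k) n m| := by
          refine mul_le_mul_of_nonneg_left ?_ hpow0
          exact Finset.single_le_sum
            (f := fun m => |((ham d L (Function.update ω (↑n) (u * ω ↑n))) ^ k) n m|)
            (fun m _ => abs_nonneg _) (Finset.mem_univ n)
      _ ≤ |ω (↑n : Fin d → ℤ)| ^ (2*p) * gfun d L ω k ↑n :=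
          mul_le_mul_of_nonneg_left hrow hpow0
      _ = ((paths d L k ↑n).map
            (fun mon => |ω (↑n : Fin d → ℤ)| ^ (2*p) * pathVal d ω mon)).sum := by
          rw [gfun, ← Multiset.sum_map_mul_left]
      _ ≤ G ω := Multiset.sum_map_le_sum_map _ _ (fun mon _ => monFun_ge p (↑n) mon ω)
  calc |∫ ω, (ω (↑n : Fin d → ℤ)) ^ (2*p) *
        ((ham d L (Function.update ω (↑n) (u * ω ↑n))) ^ k) n n ∂Pr|
      ≤ ∫ ω, |(ω (↑n : Fin d → ℤ)) ^ (2*p) *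
        ((ham d L (Function.update ω (↑n) (u * ω ↑n))) ^ k) n n| ∂Pr := by
        simpa only [Real.norm_eq_abs] using norm_integral_le_integral_norm
          (f := fun ω : Cfg d => (ω (↑n : Fin d → ℤ)) ^ (2*p) *
            ((ham d L (Function.update ω (↑n) (u * ω ↑n))) ^ k) n n) (μ := Pr)
    _ ≤ ∫ ω, G ω ∂Pr := integral_mono_of_nonneg
        (Filter.Eventually.of_forall fun ω => abs_nonneg _) hGint
        (Filter.Eventually.of_forall hpt)
    _ ≤ _ := hGle

end Aux4

end PathAux

/-- bound on the moments of the modified finite-volume measure `ν̄_{p,L}`. -/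
theorem nubar_moment_bound (d : ℕ) (hd : 1 ≤ d) (μ : Measure ℝ) [IsProbabilityMeasure μ]
    (Pr : Measure (Cfg d)) [IsProbabilityMeasure Pr] (hiid : IID d μ Pr)
    (hint : ∀ k : ℕ, Integrable (fun x => |x| ^ k) μ)
    (C a : ℝ) (hC : 1 ≤ C) (ha : 1 ≤ a)
    (hmom : ∀ k : ℕ, (∫ x, |x| ^ k ∂μ) ≤ C * a ^ k * (k : ℝ) ^ k)
    (p k : ℕ) (hk : 1 ≤ k) (L : ℕ) :
    |(((cube d L).card : ℝ))⁻¹ *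
        ∑ n ∈ (cube d L).attach,
          ∫ u in Set.Icc (0 : ℝ) 1,
            ∫ ω, (ω (n : Fin d → ℤ)) ^ (2 * p) *
              ((ham d L (Function.update ω (n : Fin d → ℤ) (u * ω (n : Fin d → ℤ)))) ^ k)
                n n ∂Pr| ≤
      (2 * (d : ℝ) + 1) ^ k * C ^ k * a ^ (k + 2 * p) *
        ((k : ℝ) + 2 * p) ^ (k + 2 * p) := by
  classical
  obtain ⟨-, hmap⟩ := hiid
  have hC0 : (0:ℝ) ≤ C := by linarith
  set V := (((2*d+1)^k : ℕ) : ℝ) *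
      (C * a ^ (k + 2*p) * ((k + 2*p : ℕ) : ℝ) ^ (k + 2*p)) with hV
  have hVnn : 0 ≤ V := by
    rw [hV]
    exact mul_nonneg (by positivity)
      (mul_nonneg (mul_nonneg hC0 (by positivity)) (by positivity))
  have houter : ∀ n ∈ (cube d L).attach,
      |∫ u in Set.Icc (0:ℝ) 1, ∫ ω, (ω (n : Fin d → ℤ)) ^ (2 * p) *
        ((ham d L (Function.update ω (n : Fin d → ℤ) (u * ω (n : Fin d → ℤ)))) ^ k)
          n n ∂Pr| ≤ V := by
    intro n _
    calc |∫ u in Set.Icc (0:ℝ) 1, ∫ ω, (ω (n : Fin d → ℤ)) ^ (2 * p) *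
          ((ham d L (Function.update ω (n : Fin d → ℤ) (u * ω (n : Fin d → ℤ)))) ^ k)
            n n ∂Pr|
        ≤ ∫ u in Set.Icc (0:ℝ) 1, |∫ ω, (ω (n : Fin d → ℤ)) ^ (2 * p) *
          ((ham d L (Function.update ω (n : Fin d → ℤ) (u * ω (n : Fin d → ℤ)))) ^ k)
            n n ∂Pr| := by
          simpa only [Real.norm_eq_abs] using norm_integral_le_integral_norm
            (f := fun u => ∫ ω, (ω (n : Fin d → ℤ)) ^ (2 * p) *
              ((ham d L (Function.update ω (n : Fin d → ℤ) (u * ω (n : Fin d → ℤ)))) ^ k)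
                n n ∂Pr) (μ := volume.restrict (Set.Icc (0:ℝ) 1))
      _ ≤ ∫ _u in Set.Icc (0:ℝ) 1, V := by
          apply integral_mono_of_nonneg
            (Filter.Eventually.of_forall fun u => abs_nonneg _)
          · exact integrableOn_const
              (by rw [Real.volume_Icc]; exact ENNReal.ofReal_ne_top)
          · filter_upwards [ae_restrict_mem measurableSet_Icc] with u hu
            exact inner_bound hmap hint hC ha hmom p k hk n u
              (abs_le.mpr ⟨by linarith [hu.1], hu.2⟩)
      _ = V := by
          rw [setIntegral_const, Real.volume_real_Icc, smul_eq_mul]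
          norm_num
  have hcardpos : (0:ℝ) < ((cube d L).card : ℝ) := by
    have h0 : (fun _ => 0 : Fin d → ℤ) ∈ cube d L := by
      rw [cube, Fintype.mem_piFinset]
      intro i
      rw [Finset.mem_Icc]
      exact ⟨neg_nonpos.mpr (Int.natCast_nonneg L), Int.natCast_nonneg L⟩
    exact_mod_cast Finset.card_pos.mpr ⟨_, h0⟩
  have hmain : |(((cube d L).card : ℝ))⁻¹ *
      ∑ n ∈ (cube d L).attach,
        ∫ u in Set.Icc (0 : ℝ) 1,
          ∫ ω, (ω (n : Fin d → ℤ)) ^ (2 * p) *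
            ((ham d L (Function.update ω (n : Fin d → ℤ) (u * ω (n : Fin d → ℤ)))) ^ k)
              n n ∂Pr| ≤ V := by
    rw [abs_mul, abs_inv, Nat.abs_cast]
    have h1 := Finset.abs_sum_le_sum_abs
      (fun n : {x // x ∈ cube d L} => ∫ u in Set.Icc (0 : ℝ) 1,
        ∫ ω, (ω (n : Fin d → ℤ)) ^ (2 * p) *
          ((ham d L (Function.update ω (n : Fin d → ℤ) (u * ω (n : Fin d → ℤ)))) ^ k)
            n n ∂Pr) (cube d L).attach
    have h2 := Finset.sum_le_card_nsmul (cube d L).attach _ V houter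
    rw [Finset.card_attach, nsmul_eq_mul] at h2
    calc (((cube d L).card : ℝ))⁻¹ * |∑ n ∈ (cube d L).attach,
          ∫ u in Set.Icc (0 : ℝ) 1,
            ∫ ω, (ω (n : Fin d → ℤ)) ^ (2 * p) *
              ((ham d L (Function.update ω (n : Fin d → ℤ) (u * ω (n : Fin d → ℤ)))) ^ k)
                n n ∂Pr|
        ≤ (((cube d L).card : ℝ))⁻¹ * (((cube d L).card : ℝ) * V) := by
          apply mul_le_mul_of_nonneg_left (h1.trans h2)
          exact inv_nonneg.mpr hcardpos.le
      _ = V := by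
          rw [← mul_assoc, inv_mul_cancel₀ hcardpos.ne', one_mul]
  refine hmain.trans ?_
  rw [hV, Nat.cast_pow]
  have hc1 : ((2*d+1 : ℕ) : ℝ) = 2*(d:ℝ)+1 := by push_cast; ring
  have hc2 : ((k + 2*p : ℕ) : ℝ) = (k:ℝ) + 2*p := by push_cast; ring
  rw [hc1, hc2]
  have hCk : C ≤ C^k := le_self_pow₀ hC (by omega)
  have h2 : C * a ^ (k+2*p) * ((k:ℝ) + 2*p) ^ (k+2*p)
      ≤ C^k * a^(k+2*p) * ((k:ℝ) + 2*p) ^ (k+2*p) := by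
    apply mul_le_mul_of_nonneg_right
      (mul_le_mul_of_nonneg_right hCk (by positivity)) (by positivity)
  calc (2*(d:ℝ)+1) ^ k * (C * a ^ (k + 2*p) * ((k:ℝ) + 2*p) ^ (k + 2*p))
      ≤ (2*(d:ℝ)+1) ^ k * (C^k * a ^ (k + 2*p) * ((k:ℝ) + 2*p) ^ (k + 2*p)) :=
        mul_le_mul_of_nonneg_left h2 (by positivity)
    _ = (2*(d:ℝ)+1) ^ k * C^k * a ^ (k + 2*p) * ((k:ℝ) + 2*p) ^ (k + 2*p) := by ring
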